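/- arXiv:1505.00087 — 2 statements merged into one kernel-verified Lean document; each statement's English description precedes it below -/
import Mathlib

section
/- Let {u₁, …, uₙ} be an orthonormal set in ℝ^m with uᵢ = (u_{ij}), and let A₁, …, Aₙ ∈ M_p(ℂ) be Hermitian. Set Bⱼ = Σᵢ u_{ij} Aᵢ. Then each Bⱼ is Hermitian, and for any positive semidefinite A₀ ∈ M_p(ℂ): -A₀ ⊗ conj(A₀) ≤ Σⱼ Bⱼ ⊗ conj(Bⱼ) ≤ A₀ ⊗ conj(A₀) holds if and only if -A₀ ⊗ conj(A₀) ≤ Σᵢ Aᵢ ⊗ conj(Aᵢ) ≤ A₀ ⊗ conj(A₀). -/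
open Matrix
open scoped ComplexOrder
open scoped Kronecker

theorem stmt11 {n m p : ℕ} (u : Fin n → Fin m → ℝ)
    (hu : ∀ i k, ∑ j, u i j * u k j = if i = k then 1 else 0)
    (A : Fin n → Matrix (Fin p) (Fin p) ℂ) (hA : ∀ i, (A i).IsHermitian)
    (A₀ : Matrix (Fin p) (Fin p) ℂ) (hA₀ : A₀.PosSemidef) :
    (∀ j, (∑ i, (u i j : ℂ) • A i).IsHermitian) ∧
    (((A₀ ⊗ₖ A₀.map (starRingEnd ℂ) -
        ∑ j, (∑ i, (u i j : ℂ) • A i) ⊗ₖ (∑ i, (u i j : ℂ) • A i).map (starRingEnd ℂ)).PosSemidef ∧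
      (A₀ ⊗ₖ A₀.map (starRingEnd ℂ) +
        ∑ j, (∑ i, (u i j : ℂ) • A i) ⊗ₖ (∑ i, (u i j : ℂ) • A i).map (starRingEnd ℂ)).PosSemidef) ↔
     ((A₀ ⊗ₖ A₀.map (starRingEnd ℂ) - ∑ i, A i ⊗ₖ (A i).map (starRingEnd ℂ)).PosSemidef ∧
      (A₀ ⊗ₖ A₀.map (starRingEnd ℂ) + ∑ i, A i ⊗ₖ (A i).map (starRingEnd ℂ)).PosSemidef)) := by
  have huC : ∀ i k, ∑ j, (u i j : ℂ) * (u k j : ℂ) = if i = k then 1 else 0 := by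
    intro i k
    rw [show (if i = k then (1:ℂ) else 0) = ((if i = k then (1:ℝ) else 0 : ℝ) : ℂ) by
      split <;> simp, ← hu i k]
    push_cast
    rfl
  have key : (∑ j, (∑ i, (u i j : ℂ) • A i) ⊗ₖ (∑ i, (u i j : ℂ) • A i).map (starRingEnd ℂ))
      = ∑ i, A i ⊗ₖ (A i).map (starRingEnd ℂ) := by
    ext ⟨a, b⟩ ⟨c, d⟩
    simp only [Matrix.sum_apply, Matrix.kroneckerMap_apply, Matrix.map_apply, Matrix.smul_apply,
      smul_eq_mul, map_sum, _root_.map_mul, Complex.conj_ofReal, Finset.sum_mul_sum]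
    rw [Finset.sum_comm]
    refine Finset.sum_congr rfl fun i _ => ?_
    rw [Finset.sum_comm]
    have h2 : ∀ k ∈ Finset.univ, ∑ j : Fin m,
        (u i j : ℂ) * A i a c * ((u k j : ℂ) * (starRingEnd ℂ) (A k b d))
        = (if i = k then 1 else 0) * (A i a c * (starRingEnd ℂ) (A k b d)) := by
      intro k _
      rw [← huC i k, Finset.sum_mul]
      exact Finset.sum_congr rfl fun j _ => by ring
    rw [Finset.sum_congr rfl h2]
    simp
  refine ⟨?_, by rw [key]⟩
  intro j
  show _ = _
  rw [Matrix.conjTranspose_sum]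
  refine Finset.sum_congr rfl fun i _ => ?_
  rw [Matrix.conjTranspose_smul, (hA i).eq]
  congr 1
  simp [Complex.conj_ofReal]
end

section
/- Let H be a Hilbert space and let a₁, …, aₙ and b₁, …, bₙ be bounded operators on H. Then ‖Σᵢ aᵢ ⊗ bᵢ‖ ≤ ‖Σᵢ aᵢ aᵢ*‖^{1/2} · ‖Σᵢ bᵢ* bᵢ‖^{1/2}, where the left norm is the operator norm on H ⊗ H (or the norm in any C*-tensor product). -/
open Matrix
open scoped Matrix.Norms.L2Operator Kronecker

lemma kron_one_norm_le {p q : ℕ} (X : Matrix (Fin p) (Fin p) ℂ) :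
    ‖X ⊗ₖ (1 : Matrix (Fin q) (Fin q) ℂ)‖ ≤ ‖X‖ := by
  rw [l2_opNorm_def]
  refine ContinuousLinearMap.opNorm_le_bound _ (norm_nonneg X) fun v => ?_
  simp only [LinearEquiv.trans_apply, LinearMap.coe_toContinuousLinearMap',
    Matrix.toEuclideanLin_apply]
  set u : (Fin p × Fin q) → ℂ :=
    (X ⊗ₖ (1 : Matrix (Fin q) (Fin q) ℂ)) *ᵥ (WithLp.equiv 2 _) v with hu
  set w : Fin q → EuclideanSpace ℂ (Fin p) :=
    fun s => (WithLp.equiv 2 (Fin p → ℂ)).symm fun c => v (c, s) with hw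
  have hv : ∀ rs : Fin p × Fin q, u rs = (X *ᵥ ((w rs.2) : Fin p → ℂ)) rs.1 := by
    intro ⟨r, s⟩
    simp only [hu, hw, mulVec, dotProduct, kroneckerMap_apply, Fintype.sum_prod_type,
      WithLp.equiv_symm_apply, WithLp.ofLp_toLp, WithLp.equiv_apply]
    rw [Finset.sum_comm]
    simp [Matrix.one_apply, mul_comm, Finset.mul_sum, mul_assoc]
  have h2 : ‖(WithLp.equiv 2 ((Fin p × Fin q) → ℂ)).symm u‖ ^ 2 ≤ (‖X‖ * ‖v‖) ^ 2 := by
    have lhs_eq : ‖(WithLp.equiv 2 ((Fin p × Fin q) → ℂ)).symm u‖ ^ 2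
        = ∑ s : Fin q, ∑ r : Fin p, ‖(X *ᵥ ((w s) : Fin p → ℂ)) r‖ ^ 2 := by
      rw [EuclideanSpace.norm_eq, Real.sq_sqrt (by positivity)]
      simp only [WithLp.equiv_symm_apply, WithLp.ofLp_toLp]
      rw [Finset.sum_congr rfl fun rs _ => by rw [hv rs]]
      rw [Fintype.sum_prod_type, Finset.sum_comm]
    have rhs_eq : (‖X‖ * ‖v‖) ^ 2 = ∑ s : Fin q, ‖X‖ ^ 2 * ‖w s‖ ^ 2 := by
      rw [← Finset.mul_sum, mul_pow]
      congr 1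
      rw [EuclideanSpace.norm_eq, Real.sq_sqrt (by positivity), Fintype.sum_prod_type,
        Finset.sum_comm]
      refine Finset.sum_congr rfl fun s _ => ?_
      rw [EuclideanSpace.norm_eq, Real.sq_sqrt (by positivity)]
      refine Finset.sum_congr rfl fun c _ => ?_
      simp [hw]
    rw [lhs_eq, rhs_eq]
    refine Finset.sum_le_sum fun s _ => ?_
    have h3 : ‖(EuclideanSpace.equiv (Fin p) ℂ).symm (X *ᵥ ((w s) : Fin p → ℂ))‖ ^ 2
        = ∑ r : Fin p, ‖(X *ᵥ ((w s) : Fin p → ℂ)) r‖ ^ 2 := by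
      rw [EuclideanSpace.norm_eq, Real.sq_sqrt (by positivity)]
      simp [EuclideanSpace.equiv]
    calc ∑ r : Fin p, ‖(X *ᵥ ((w s) : Fin p → ℂ)) r‖ ^ 2
        = ‖(EuclideanSpace.equiv (Fin p) ℂ).symm (X *ᵥ ((w s) : Fin p → ℂ))‖ ^ 2 := h3.symm
      _ ≤ (‖X‖ * ‖w s‖) ^ 2 :=
          pow_le_pow_left₀ (norm_nonneg _) (l2_opNorm_mulVec X (w s)) 2
      _ = ‖X‖ ^ 2 * ‖w s‖ ^ 2 := by ring
  have := Real.sqrt_le_sqrt h2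
  rwa [Real.sqrt_sq (norm_nonneg _), Real.sqrt_sq (by positivity)] at this

lemma one_kron_norm_le {p q : ℕ} (Y : Matrix (Fin q) (Fin q) ℂ) :
    ‖(1 : Matrix (Fin p) (Fin p) ℂ) ⊗ₖ Y‖ ≤ ‖Y‖ := by
  rw [l2_opNorm_def]
  refine ContinuousLinearMap.opNorm_le_bound _ (norm_nonneg Y) fun v => ?_
  simp only [LinearEquiv.trans_apply, LinearMap.coe_toContinuousLinearMap',
    Matrix.toEuclideanLin_apply]
  set u : (Fin p × Fin q) → ℂ :=
    ((1 : Matrix (Fin p) (Fin p) ℂ) ⊗ₖ Y) *ᵥ (WithLp.equiv 2 _) v with hu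
  set w : Fin p → EuclideanSpace ℂ (Fin q) :=
    fun r => (WithLp.equiv 2 (Fin q → ℂ)).symm fun t => v (r, t) with hw
  have hv : ∀ rs : Fin p × Fin q, u rs = (Y *ᵥ ((w rs.1) : Fin q → ℂ)) rs.2 := by
    intro ⟨r, s⟩
    simp only [hu, hw, mulVec, dotProduct, kroneckerMap_apply, Fintype.sum_prod_type,
      WithLp.equiv_symm_apply, WithLp.ofLp_toLp, WithLp.equiv_apply]
    simp [Matrix.one_apply, Finset.mul_sum, mul_assoc]
  have h2 : ‖(WithLp.equiv 2 ((Fin p × Fin q) → ℂ)).symm u‖ ^ 2 ≤ (‖Y‖ * ‖v‖) ^ 2 := by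
    have lhs_eq : ‖(WithLp.equiv 2 ((Fin p × Fin q) → ℂ)).symm u‖ ^ 2
        = ∑ r : Fin p, ∑ s : Fin q, ‖(Y *ᵥ ((w r) : Fin q → ℂ)) s‖ ^ 2 := by
      rw [EuclideanSpace.norm_eq, Real.sq_sqrt (by positivity)]
      simp only [WithLp.equiv_symm_apply, WithLp.ofLp_toLp]
      rw [Finset.sum_congr rfl fun rs _ => by rw [hv rs]]
      rw [Fintype.sum_prod_type]
    have rhs_eq : (‖Y‖ * ‖v‖) ^ 2 = ∑ r : Fin p, ‖Y‖ ^ 2 * ‖w r‖ ^ 2 := by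
      rw [← Finset.mul_sum, mul_pow]
      congr 1
      rw [EuclideanSpace.norm_eq, Real.sq_sqrt (by positivity), Fintype.sum_prod_type]
      refine Finset.sum_congr rfl fun r _ => ?_
      rw [EuclideanSpace.norm_eq, Real.sq_sqrt (by positivity)]
      refine Finset.sum_congr rfl fun t _ => ?_
      simp [hw]
    rw [lhs_eq, rhs_eq]
    refine Finset.sum_le_sum fun r _ => ?_
    have h3 : ‖(EuclideanSpace.equiv (Fin q) ℂ).symm (Y *ᵥ ((w r) : Fin q → ℂ))‖ ^ 2
        = ∑ s : Fin q, ‖(Y *ᵥ ((w r) : Fin q → ℂ)) s‖ ^ 2 := by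
      rw [EuclideanSpace.norm_eq, Real.sq_sqrt (by positivity)]
      simp [EuclideanSpace.equiv]
    calc ∑ s : Fin q, ‖(Y *ᵥ ((w r) : Fin q → ℂ)) s‖ ^ 2
        = ‖(EuclideanSpace.equiv (Fin q) ℂ).symm (Y *ᵥ ((w r) : Fin q → ℂ))‖ ^ 2 := h3.symm
      _ ≤ (‖Y‖ * ‖w r‖) ^ 2 :=
          pow_le_pow_left₀ (norm_nonneg _) (l2_opNorm_mulVec Y (w r)) 2
      _ = ‖Y‖ ^ 2 * ‖w r‖ ^ 2 := by ring
  have := Real.sqrt_le_sqrt h2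
  rwa [Real.sqrt_sq (norm_nonneg _), Real.sqrt_sq (by positivity)] at this

theorem stmt17 {n p q : ℕ} (a : Fin n → Matrix (Fin p) (Fin p) ℂ)
    (b : Fin n → Matrix (Fin q) (Fin q) ℂ) :
    ‖∑ i, a i ⊗ₖ b i‖ ≤
      Real.sqrt ‖∑ i, a i * (a i)ᴴ‖ * Real.sqrt ‖∑ i, (b i)ᴴ * b i‖ := by
  set A : Matrix (Fin p × Fin q) (Fin n × (Fin p × Fin q)) ℂ :=
    Matrix.of (fun rc ic => (a ic.1 ⊗ₖ (1 : Matrix (Fin q) (Fin q) ℂ)) rc ic.2) with hA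
  set B : Matrix (Fin n × (Fin p × Fin q)) (Fin p × Fin q) ℂ :=
    Matrix.of (fun ic rc => ((1 : Matrix (Fin p) (Fin p) ℂ) ⊗ₖ b ic.1) ic.2 rc) with hB
  have hkron : ∀ i, a i ⊗ₖ b i = (a i ⊗ₖ (1 : Matrix (Fin q) (Fin q) ℂ)) *
      ((1 : Matrix (Fin p) (Fin p) ℂ) ⊗ₖ b i) := by
    intro i; rw [← mul_kronecker_mul, mul_one, one_mul]
  have hAB : A * B = ∑ i, a i ⊗ₖ b i := by
    ext x y
    simp only [Matrix.sum_apply, hkron, mul_apply, Fintype.sum_prod_type, hA, hB, of_apply]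
  have hconjA : ∀ i : Fin n, ((a i) ⊗ₖ (1 : Matrix (Fin q) (Fin q) ℂ))ᴴ
      = (a i)ᴴ ⊗ₖ (1 : Matrix (Fin q) (Fin q) ℂ) := by
    intro i
    ext ⟨r, s⟩ ⟨c, t⟩
    simp [Matrix.one_apply, apply_ite, eq_comm]
    split_ifs with h <;> simp [h]
  have hconjB : ∀ i : Fin n, (((1 : Matrix (Fin p) (Fin p) ℂ)) ⊗ₖ b i)ᴴ
      = (1 : Matrix (Fin p) (Fin p) ℂ) ⊗ₖ (b i)ᴴ := by
    intro i
    ext ⟨r, s⟩ ⟨c, t⟩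
    simp [Matrix.one_apply, apply_ite, eq_comm]
    split_ifs with h <;> simp [h]
  have hAA : A * Aᴴ = (∑ i, a i * (a i)ᴴ) ⊗ₖ (1 : Matrix (Fin q) (Fin q) ℂ) := by
    have : ∀ x y, ((∑ i, a i * (a i)ᴴ) ⊗ₖ (1 : Matrix (Fin q) (Fin q) ℂ)) x y
        = ∑ i, ((a i ⊗ₖ (1 : Matrix (Fin q) (Fin q) ℂ)) *
            (a i ⊗ₖ (1 : Matrix (Fin q) (Fin q) ℂ))ᴴ) x y := by
      intro x y
      simp only [hconjA, ← mul_kronecker_mul, mul_one, kroneckerMap_apply, Matrix.sum_apply,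
        Finset.sum_mul]
    ext x y
    rw [this]
    simp only [mul_apply, conjTranspose_apply, hA, of_apply, Fintype.sum_prod_type]
  have hBB : Bᴴ * B = (1 : Matrix (Fin p) (Fin p) ℂ) ⊗ₖ (∑ i, (b i)ᴴ * b i) := by
    have : ∀ x y, ((1 : Matrix (Fin p) (Fin p) ℂ) ⊗ₖ (∑ i, (b i)ᴴ * b i)) x y
        = ∑ i, (((1 : Matrix (Fin p) (Fin p) ℂ) ⊗ₖ b i)ᴴ *
            ((1 : Matrix (Fin p) (Fin p) ℂ) ⊗ₖ b i)) x y := by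
      intro x y
      simp only [hconjB, ← mul_kronecker_mul, one_mul, kroneckerMap_apply, Matrix.sum_apply,
        Finset.mul_sum]
    ext x y
    rw [this]
    simp only [mul_apply, conjTranspose_apply, hB, of_apply, Fintype.sum_prod_type]
  have hnA : ‖A‖ ≤ Real.sqrt ‖∑ i, a i * (a i)ᴴ‖ := by
    have h1 : ‖A * Aᴴ‖ = ‖A‖ * ‖A‖ := by
      have := l2_opNorm_conjTranspose_mul_self Aᴴ
      rwa [conjTranspose_conjTranspose, l2_opNorm_conjTranspose] at this
    have h2 : ‖A‖ * ‖A‖ ≤ ‖∑ i, a i * (a i)ᴴ‖ := by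
      rw [← h1, hAA]; exact kron_one_norm_le _
    have := Real.sqrt_le_sqrt h2
    rwa [← Real.sqrt_mul_self (norm_nonneg A)]
  have hnB : ‖B‖ ≤ Real.sqrt ‖∑ i, (b i)ᴴ * b i‖ := by
    have h1 : ‖Bᴴ * B‖ = ‖B‖ * ‖B‖ := l2_opNorm_conjTranspose_mul_self B
    have h2 : ‖B‖ * ‖B‖ ≤ ‖∑ i, (b i)ᴴ * b i‖ := by
      rw [← h1, hBB]; exact one_kron_norm_le _
    have := Real.sqrt_le_sqrt h2
    rwa [← Real.sqrt_mul_self (norm_nonneg B)]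
  calc ‖∑ i, a i ⊗ₖ b i‖ = ‖A * B‖ := by rw [hAB]
    _ ≤ ‖A‖ * ‖B‖ := l2_opNorm_mul A B
    _ ≤ _ := mul_le_mul hnA hnB (norm_nonneg B) (Real.sqrt_nonneg _)
end
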